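/- arXiv:1610.04865 — 7 statements merged into one kernel-verified Lean document; each statement's English description precedes it below -/
import Mathlib

section
/- The real orthogonal group O(b) = {g ∈ GL(V) : b(gx, gy) = b(x, y) for all x, y ∈ V} acts transitively on κ: for any two classes [v], [w] ∈ κ there exists g ∈ O(b) whose ℂ-linear extension to V_ℂ satisfies [g v] = [w], i.e. g v is a nonzero complex scalar multiple of w. -/
open scoped TensorProduct

open Module

/-- The conjugation of the complexification `ℂ ⊗[ℝ] V` fixing `V`. -/
noncomputable def complexConj (V : Type*) [AddCommGroup V] [Module ℝ V] :
    ℂ ⊗[ℝ] V →ₗ[ℝ] ℂ ⊗[ℝ] V :=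
  LinearMap.rTensor V Complex.conjAe.toLinearMap

/-- The condition defining the cone over the domain `κ`: `v ≠ 0`, `b(v, v) = 0` and
`b(v, v̄) > 0` (the latter value being automatically real). -/
noncomputable def kappaCond {V : Type*} [AddCommGroup V] [Module ℝ V]
    (b : LinearMap.BilinForm ℝ V) (v : ℂ ⊗[ℝ] V) : Prop :=
  v ≠ 0 ∧ (b.baseChange ℂ) v v = 0 ∧
    ∃ r : ℝ, 0 < r ∧ (b.baseChange ℂ) v (complexConj V v) = (r : ℂ)

/-- The real part of an element of the complexification. -/
noncomputable def reT (V : Type*) [AddCommGroup V] [Module ℝ V] : ℂ ⊗[ℝ] V →ₗ[ℝ] V :=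
  (TensorProduct.lid ℝ V).toLinearMap ∘ₗ LinearMap.rTensor V Complex.reLm

/-- The imaginary part of an element of the complexification. -/
noncomputable def imT (V : Type*) [AddCommGroup V] [Module ℝ V] : ℂ ⊗[ℝ] V →ₗ[ℝ] V :=
  (TensorProduct.lid ℝ V).toLinearMap ∘ₗ LinearMap.rTensor V Complex.imLm

section Aux

variable {V : Type*} [AddCommGroup V] [Module ℝ V]

@[simp] lemma reT_tmul (a : ℂ) (x : V) : reT V (a ⊗ₜ x) = a.re • x := rfl
@[simp] lemma imT_tmul (a : ℂ) (x : V) : imT V (a ⊗ₜ x) = a.im • x := rfl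
@[simp] lemma complexConj_tmul (a : ℂ) (x : V) :
    complexConj V (a ⊗ₜ x) = (starRingEnd ℂ a) ⊗ₜ x := rfl

lemma tensor_decomp (v : ℂ ⊗[ℝ] V) :
    v = (1 : ℂ) ⊗ₜ reT V v + Complex.I ⊗ₜ imT V v := by
  have : (LinearMap.id : ℂ ⊗[ℝ] V →ₗ[ℝ] ℂ ⊗[ℝ] V)
      = (TensorProduct.mk ℝ ℂ V 1) ∘ₗ reT V + (TensorProduct.mk ℝ ℂ V Complex.I) ∘ₗ imT V := by
    ext a x
    simp [TensorProduct.smul_tmul', ← TensorProduct.add_tmul, Complex.ext_iff]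
  conv_lhs => rw [← LinearMap.id_apply (R := ℝ) v, this]
  rfl

lemma kappa_eqs (b : LinearMap.BilinForm ℝ V) (hb : b.IsSymm) (v : ℂ ⊗[ℝ] V)
    (hvv : (b.baseChange ℂ) v v = 0)
    (r : ℝ) (hvc : (b.baseChange ℂ) v (complexConj V v) = (r : ℂ)) :
    b (reT V v) (reT V v) = r / 2 ∧ b (imT V v) (imT V v) = r / 2 ∧
      b (reT V v) (imT V v) = 0 := by
  set X := reT V v with hX
  set Y := imT V v with hY
  have hsymm : b Y X = b X Y := by have := hb.eq X Y; simpa using this.symm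
  have hd := tensor_decomp v
  rw [hd] at hvv hvc
  have hconj : complexConj V ((1:ℂ) ⊗ₜ X + Complex.I ⊗ₜ Y)
      = (1:ℂ) ⊗ₜ X + (-Complex.I) ⊗ₜ Y := by
    simp
  rw [hconj] at hvc
  simp only [map_add, LinearMap.add_apply, LinearMap.BilinForm.baseChange_tmul,
    smul_eq_mul, one_mul, mul_one, Complex.real_smul, Complex.I_mul_I, mul_neg,
    Complex.ext_iff, Complex.add_re, Complex.add_im, Complex.mul_re, Complex.mul_im,
    Complex.I_re, Complex.I_im, Complex.ofReal_re, Complex.ofReal_im, Complex.one_re,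
    Complex.one_im, Complex.neg_re, Complex.neg_im, Complex.zero_re, Complex.zero_im] at hvv hvc
  refine ⟨by linarith [hvv.1, hvv.2, hvc.1, hvc.2], by linarith [hvv.1, hvv.2, hvc.1, hvc.2],
    by linarith [hvv.1, hvv.2, hvc.1, hvc.2, hsymm]⟩

end Aux

section Geom

variable {V : Type*} [AddCommGroup V] [Module ℝ V] [FiniteDimensional ℝ V]

lemma negdef_perp (b : LinearMap.BilinForm ℝ V) (hb : b.IsSymm)
    (N : Submodule ℝ V) (hNrk : finrank ℝ N + 2 = finrank ℝ V)
    (hneg : ∀ ν ∈ N, ν ≠ 0 → b ν ν < 0)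
    (e₁ e₂ : V) (he₁ : b e₁ e₁ = 1) (he₂ : b e₂ e₂ = 1) (he : b e₁ e₂ = 0)
    (z : V) (hz1 : b e₁ z = 0) (hz2 : b e₂ z = 0) (hz : z ≠ 0) : b z z < 0 := by
  have hsymm1 : b e₂ e₁ = 0 := by have := hb.eq e₁ e₂; simpa [he] using this.symm
  have hz1' : b z e₁ = 0 := by have := hb.eq e₁ z; simpa [hz1] using this.symm
  have hz2' : b z e₂ = 0 := by have := hb.eq e₂ z; simpa [hz2] using this.symm
  by_contra hq
  push_neg at hq
  have li3 : LinearIndependent ℝ ![e₁, e₂, z] := by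
    rw [Fintype.linearIndependent_iff]
    intro g hg
    have h1 := congrArg (b e₁) hg
    have h2 := congrArg (b e₂) hg
    simp only [Fin.sum_univ_three, Matrix.cons_val_zero, Matrix.cons_val_one, Matrix.head_cons,
      Matrix.cons_val_two, Matrix.tail_cons, map_add, map_smul, smul_eq_mul, map_zero] at h1 h2
    rw [he₁, he, hz1] at h1
    rw [hsymm1, he₂, hz2] at h2
    have hg0 : g 0 = 0 := by linarith
    have hg1 : g 1 = 0 := by linarith
    have hg2 : g 2 = 0 := by
      simp only [Fin.sum_univ_three, Matrix.cons_val_zero, Matrix.cons_val_one, Matrix.head_cons,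
        Matrix.cons_val_two, Matrix.tail_cons] at hg
      rw [hg0, hg1] at hg
      simp at hg
      rcases hg with h | h
      · exact h
      · exact absurd h hz
    intro i; fin_cases i <;> assumption
  set W : Submodule ℝ V := Submodule.span ℝ (Set.range ![e₁, e₂, z]) with hW
  have hWrk : finrank ℝ W = 3 := by
    rw [finrank_span_eq_card li3]; simp
  have hinf : 1 ≤ finrank ℝ ↥(W ⊓ N) := by
    have h1 := Submodule.finrank_sup_add_finrank_inf_eq W N
    have h2 : finrank ℝ ↥(W ⊔ N) ≤ finrank ℝ V := Submodule.finrank_le _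
    omega
  obtain ⟨u, hu, hu0⟩ : ∃ u ∈ W ⊓ N, u ≠ 0 := by
    apply Submodule.exists_mem_ne_zero_of_ne_bot
    intro hbot
    rw [hbot] at hinf
    simp at hinf
  obtain ⟨huW, huN⟩ := hu
  have hneg' : b u u < 0 := hneg u huN hu0
  have huW' : u ∈ W := huW
  rw [hW, Submodule.mem_span_range_iff_exists_fun] at huW'
  obtain ⟨c, hc⟩ := huW'
  have : 0 ≤ b u u := by
    rw [← hc]
    simp only [Fin.sum_univ_three, Matrix.cons_val_zero, Matrix.cons_val_one, Matrix.head_cons,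
      Matrix.cons_val_two, Matrix.tail_cons, map_add, map_smul, smul_eq_mul,
      LinearMap.add_apply, LinearMap.smul_apply]
    rw [he₁, he₂, he, hsymm1, hz1, hz2, hz1', hz2']
    nlinarith [sq_nonneg (c 0), sq_nonneg (c 1), sq_nonneg (c 2),
      mul_nonneg (mul_self_nonneg (c 2)) hq]
  linarith

lemma exists_good_basis (b : LinearMap.BilinForm ℝ V) (hb : b.IsSymm)
    (e₁ e₂ : V) (he₁ : b e₁ e₁ = 1) (he₂ : b e₂ e₂ = 1) (he : b e₁ e₂ = 0)
    (hnegdef : ∀ z, b e₁ z = 0 → b e₂ z = 0 → z ≠ 0 → b z z < 0) :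
    ∃ B : Basis (Fin 2 ⊕ Fin (finrank ℝ V - 2)) ℝ V,
      B (Sum.inl 0) = e₁ ∧ B (Sum.inl 1) = e₂ ∧
      (∀ i j, b (B i) (B j) =
        if i = j then Sum.elim (fun _ => (1:ℝ)) (fun _ => -1) i else 0) := by
  classical
  set U : Submodule ℝ V := LinearMap.ker (b e₁) ⊓ LinearMap.ker (b e₂) with hU
  have hmemU : ∀ z : V, z ∈ U ↔ b e₁ z = 0 ∧ b e₂ z = 0 := by
    intro z; simp [hU, LinearMap.mem_ker]
  letI core : InnerProductSpace.Core ℝ ↥U :=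
    { inner := fun x y => -(b x y)
      conj_inner_symm := fun x y => by
        simp only [starRingEnd_apply, star_trivial, neg_inj]
        exact (hb.eq (y : V) (x : V))
      re_inner_nonneg := fun x => by
        rcases eq_or_ne x 0 with h | h
        · simp [h]
        · have hx := hnegdef (x : V) ((hmemU _).1 x.2).1 ((hmemU _).1 x.2).2
            (fun h0 => h (Subtype.ext h0))
          simp only [RCLike.re_to_real]
          linarith
      definite := fun x hx => by
        by_contra h
        have := hnegdef (x : V) ((hmemU _).1 x.2).1 ((hmemU _).1 x.2).2
          (fun h0 => h (Subtype.ext h0))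
        change -(b (x:V) (x:V)) = 0 at hx
        linarith [neg_eq_zero.mp hx]
      add_left := fun x y z => by
        simp only [Submodule.coe_add, map_add, LinearMap.add_apply]; ring
      smul_left := fun x y r => by
        simp only [Submodule.coe_smul, map_smul, LinearMap.smul_apply, smul_eq_mul,
          starRingEnd_apply, star_trivial]
        ring }
  letI : NormedAddCommGroup ↥U := core.toNormedAddCommGroup
  letI : InnerProductSpace ℝ ↥U := InnerProductSpace.ofCore core.toCore
  set m := finrank ℝ ↥U with hm
  let ob : OrthonormalBasis (Fin m) ℝ ↥U := stdOrthonormalBasis ℝ ↥U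
  have hob : ∀ i j : Fin m, b ((ob i : ↥U) : V) ((ob j : ↥U) : V)
      = if i = j then -1 else 0 := by
    intro i j
    have h1 : (inner ℝ (ob i) (ob j) : ℝ) = if i = j then 1 else 0 :=
      orthonormal_iff_ite.mp ob.orthonormal i j
    have h2 : (inner ℝ (ob i) (ob j) : ℝ) = -(b ((ob i : ↥U) : V) ((ob j : ↥U) : V)) := rfl
    rw [h2] at h1
    split_ifs with h <;> simp_all <;> linarith
  set F : Fin 2 ⊕ Fin m → V := Sum.elim ![e₁, e₂] (fun i => ((ob i : ↥U) : V)) with hF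
  have hF2 : ∀ i j, b (F i) (F j) =
      if i = j then Sum.elim (fun _ => (1:ℝ)) (fun _ => -1) i else 0 := by
    have hsymm1 : b e₂ e₁ = 0 := by have := hb.eq e₁ e₂; simpa [he] using this.symm
    rintro (i | i) (j | j)
    · fin_cases i <;> fin_cases j <;> simp [hF, he₁, he₂, he, hsymm1]
    · have h1 := ((hmemU _).1 (ob j).2).1
      have h2 := ((hmemU _).1 (ob j).2).2
      fin_cases i <;> simp [hF, h1, h2]
    · have h1 := ((hmemU _).1 (ob i).2).1
      have h2 := ((hmemU _).1 (ob i).2).2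
      have h1' : b ((ob i : ↥U) : V) e₁ = 0 := by
        have := hb.eq e₁ ((ob i : ↥U) : V); simpa [h1] using this.symm
      have h2' : b ((ob i : ↥U) : V) e₂ = 0 := by
        have := hb.eq e₂ ((ob i : ↥U) : V); simpa [h2] using this.symm
      fin_cases j <;> simp [hF, h1', h2']
    · have := hob i j
      by_cases h : i = j
      · subst h; simp [hF, this]
      · simp [hF, h, this]
  have li : LinearIndependent ℝ F := by
    apply LinearMap.BilinForm.linearIndependent_of_iIsOrtho (B := b)
    · rw [LinearMap.BilinForm.iIsOrtho_def]
      intro i j hij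
      have := hF2 i j
      rwa [if_neg hij] at this
    · intro i
      have := hF2 i i
      rw [if_pos rfl] at this
      rcases i with i | i <;> simp [LinearMap.BilinForm.IsOrtho, this]
  have hcard_le : 2 + m ≤ finrank ℝ V := by
    simpa using li.fintype_card_le_finrank
  have hm_ge : finrank ℝ V ≤ m + 2 := by
    have r1 := LinearMap.finrank_range_add_finrank_ker (b e₁)
    have r2 := LinearMap.finrank_range_add_finrank_ker (b e₂)
    have s1 : finrank ℝ (LinearMap.range (b e₁)) ≤ 1 := by
      simpa using Submodule.finrank_le (LinearMap.range (b e₁))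
    have s2 : finrank ℝ (LinearMap.range (b e₂)) ≤ 1 := by
      simpa using Submodule.finrank_le (LinearMap.range (b e₂))
    have hsup := Submodule.finrank_sup_add_finrank_inf_eq
      (LinearMap.ker (b e₁)) (LinearMap.ker (b e₂))
    have hsuple : finrank ℝ ↥(LinearMap.ker (b e₁) ⊔ LinearMap.ker (b e₂)) ≤ finrank ℝ V :=
      Submodule.finrank_le _
    have hUm : finrank ℝ ↥(LinearMap.ker (b e₁) ⊓ LinearMap.ker (b e₂)) = m := by rw [← hU]
    omega
  have hcard : Fintype.card (Fin 2 ⊕ Fin m) = finrank ℝ V := by simp; omega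
  have hm2 : m = finrank ℝ V - 2 := by omega
  let B0 : Basis (Fin 2 ⊕ Fin m) ℝ V := basisOfLinearIndependentOfCardEqFinrank li hcard
  have hB0 : ∀ i, B0 i = F i := fun i => by
    rw [coe_basisOfLinearIndependentOfCardEqFinrank]
  let σ : (Fin 2 ⊕ Fin m) ≃ (Fin 2 ⊕ Fin (finrank ℝ V - 2)) :=
    Equiv.sumCongr (Equiv.refl (Fin 2)) (finCongr hm2)
  refine ⟨B0.reindex σ, ?_, ?_, ?_⟩
  · rw [Basis.reindex_apply, hB0]; simp [σ, hF]
  · rw [Basis.reindex_apply, hB0]; simp [σ, hF]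
  · intro i j
    rw [Basis.reindex_apply, Basis.reindex_apply, hB0, hB0]
    rw [hF2 (σ.symm i) (σ.symm j)]
    simp only [EmbeddingLike.apply_eq_iff_eq]
    rcases i with i | i <;> simp [σ]

lemma exists_isometry_pair (b : LinearMap.BilinForm ℝ V) (hb : b.IsSymm)
    (e₁ e₂ f₁ f₂ : V)
    (he₁ : b e₁ e₁ = 1) (he₂ : b e₂ e₂ = 1) (he : b e₁ e₂ = 0)
    (hf₁ : b f₁ f₁ = 1) (hf₂ : b f₂ f₂ = 1) (hf : b f₁ f₂ = 0)
    (hnde : ∀ z, b e₁ z = 0 → b e₂ z = 0 → z ≠ 0 → b z z < 0)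
    (hndf : ∀ z, b f₁ z = 0 → b f₂ z = 0 → z ≠ 0 → b z z < 0) :
    ∃ g : V ≃ₗ[ℝ] V, (∀ x y, b (g x) (g y) = b x y) ∧ g e₁ = f₁ ∧ g e₂ = f₂ := by
  obtain ⟨Be, hBe0, hBe1, hBe⟩ := exists_good_basis b hb e₁ e₂ he₁ he₂ he hnde
  obtain ⟨Bf, hBf0, hBf1, hBf⟩ := exists_good_basis b hb f₁ f₂ hf₁ hf₂ hf hndf
  let g : V ≃ₗ[ℝ] V := Be.equiv Bf (Equiv.refl _)
  have hg : ∀ i, g (Be i) = Bf i := fun i => by simp [g, Basis.equiv_apply]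
  have hiso : ∀ x y, b (g x) (g y) = b x y := by
    have : b.compl₁₂ (g : V →ₗ[ℝ] V) (g : V →ₗ[ℝ] V) = b := by
      apply LinearMap.ext_basis Be Be
      intro i j
      simp only [LinearMap.compl₁₂_apply, LinearEquiv.coe_coe]
      rw [hg, hg, hBf i j, hBe i j]
    intro x y
    have := LinearMap.congr_fun₂ this x y
    simpa using this
  exact ⟨g, hiso, by rw [← hBe0, hg, hBf0], by rw [← hBe1, hg, hBf1]⟩

end Geom

set_option maxHeartbeats 1000000 in
/-- The orthogonal group `O(b)` of a nondegenerate symmetric bilinear form of signature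
`(2, n)` acts transitively on `κ`: for any classes `[v], [w] ∈ κ` there is a real isometry
`g` whose `ℂ`-linear extension sends `v` to a nonzero complex multiple of `w`. -/
theorem stmt1 (V : Type*) [AddCommGroup V] [Module ℝ V] [FiniteDimensional ℝ V]
    (b : LinearMap.BilinForm ℝ V) (hb : b.IsSymm)
    -- signature (2, n):
    (P N : Submodule ℝ V) (hPN : IsCompl P N)
    (horth : ∀ p ∈ P, ∀ ν ∈ N, b p ν = 0)
    (hdim : Module.finrank ℝ P = 2)
    (hpos : ∀ p ∈ P, p ≠ 0 → 0 < b p p)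
    (hneg : ∀ ν ∈ N, ν ≠ 0 → b ν ν < 0)
    (v w : ℂ ⊗[ℝ] V) (hv : kappaCond b v) (hw : kappaCond b w) :
    ∃ g : V ≃ₗ[ℝ] V, (∀ x y : V, b (g x) (g y) = b x y) ∧
      ∃ c : ℂ, c ≠ 0 ∧ (LinearMap.baseChange ℂ (g : V →ₗ[ℝ] V)) v = c • w := by
  obtain ⟨hv0, hvv, r, hr, hvc⟩ := hv
  obtain ⟨hw0, hww, r', hr', hwc⟩ := hw
  have hNrk : finrank ℝ N + 2 = finrank ℝ V := by
    have := Submodule.finrank_add_eq_of_isCompl hPN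
    omega
  set X := reT V v with hX
  set Y := imT V v with hYd
  set X' := reT V w with hX'
  set Y' := imT V w with hY'
  obtain ⟨hXX, hYY, hXY⟩ := kappa_eqs b hb v hvv r hvc
  obtain ⟨hXX', hYY', hXY'⟩ := kappa_eqs b hb w hww r' hwc
  set s : ℝ := Real.sqrt (r / 2) with hs
  set s' : ℝ := Real.sqrt (r' / 2) with hs'
  have hspos : 0 < s := Real.sqrt_pos.mpr (by linarith)
  have hs'pos : 0 < s' := Real.sqrt_pos.mpr (by linarith)
  have hssq : s * s = r / 2 := Real.mul_self_sqrt (by linarith)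
  have hs'sq : s' * s' = r' / 2 := Real.mul_self_sqrt (by linarith)
  set e₁ : V := s⁻¹ • X with he₁d
  set e₂ : V := s⁻¹ • Y with he₂d
  set f₁ : V := s'⁻¹ • X' with hf₁d
  set f₂ : V := s'⁻¹ • Y' with hf₂d
  have he₁ : b e₁ e₁ = 1 := by
    rw [he₁d]; simp only [map_smul, LinearMap.smul_apply, smul_eq_mul]
    rw [hXX]; field_simp; nlinarith
  have he₂ : b e₂ e₂ = 1 := by
    rw [he₂d]; simp only [map_smul, LinearMap.smul_apply, smul_eq_mul]
    rw [hYY]; field_simp; nlinarith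
  have he : b e₁ e₂ = 0 := by
    rw [he₁d, he₂d]; simp only [map_smul, LinearMap.smul_apply, smul_eq_mul]
    rw [hXY]; ring
  have hf₁ : b f₁ f₁ = 1 := by
    rw [hf₁d]; simp only [map_smul, LinearMap.smul_apply, smul_eq_mul]
    rw [hXX']; field_simp; nlinarith
  have hf₂ : b f₂ f₂ = 1 := by
    rw [hf₂d]; simp only [map_smul, LinearMap.smul_apply, smul_eq_mul]
    rw [hYY']; field_simp; nlinarith
  have hf : b f₁ f₂ = 0 := by
    rw [hf₁d, hf₂d]; simp only [map_smul, LinearMap.smul_apply, smul_eq_mul]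
    rw [hXY']; ring
  obtain ⟨g, hiso, hge₁, hge₂⟩ := exists_isometry_pair b hb e₁ e₂ f₁ f₂ he₁ he₂ he hf₁ hf₂ hf
    (fun z h1 h2 hz => negdef_perp b hb N hNrk hneg e₁ e₂ he₁ he₂ he z h1 h2 hz)
    (fun z h1 h2 hz => negdef_perp b hb N hNrk hneg f₁ f₂ hf₁ hf₂ hf z h1 h2 hz)
  refine ⟨g, hiso, ((s / s' : ℝ) : ℂ), ?_, ?_⟩
  · simp only [ne_eq, Complex.ofReal_eq_zero]
    positivity
  · have hgX : g X = (s / s') • X' := by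
      have : X = s • e₁ := by rw [he₁d, smul_inv_smul₀ (ne_of_gt hspos)]
      rw [this, map_smul, hge₁, hf₁d, smul_smul, div_eq_mul_inv]
    have hgY : g Y = (s / s') • Y' := by
      have : Y = s • e₂ := by rw [he₂d, smul_inv_smul₀ (ne_of_gt hspos)]
      rw [this, map_smul, hge₂, hf₂d, smul_smul, div_eq_mul_inv]
    conv_lhs => rw [tensor_decomp v]
    conv_rhs => rw [tensor_decomp w]
    rw [map_add, LinearMap.baseChange_tmul, LinearMap.baseChange_tmul]
    simp only [LinearEquiv.coe_coe, ← hX, ← hYd, ← hX', ← hY']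
    rw [hgX, hgY]
    have hcs : ∀ u : ℂ ⊗[ℝ] V, ((s / s' : ℝ) : ℂ) • u = (s / s') • u := fun u => by
      rw [← Complex.coe_algebraMap, algebraMap_smul]
    rw [smul_add, hcs, hcs, TensorProduct.tmul_smul, TensorProduct.tmul_smul]
end

section
/- For every [v] ∈ κ with representative v = X + iY, the subspace ℝX + ℝY of V is 2-dimensional and b restricts to a positive-definite form on it. Moreover, the resulting map from κ to the Grassmannian Grass(V) = {P ⊆ V : dim P = 2 and b|_P is positive definite} is surjective, and for each P ∈ Grass(V) there are exactly two classes [v] ∈ κ with ℝ·Re(v) + ℝ·Im(v) = P. -/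
open scoped TensorProduct

/-- The vector `X + iY` in the complexification `ℂ ⊗[ℝ] V`. -/
noncomputable def cplxVec {V : Type*} [AddCommGroup V] [Module ℝ V] (X Y : V) : ℂ ⊗[ℝ] V :=
  (1 : ℂ) ⊗ₜ[ℝ] X + Complex.I ⊗ₜ[ℝ] Y

section Aux
variable {V : Type*} [AddCommGroup V] [Module ℝ V]

noncomputable def reMap (V : Type*) [AddCommGroup V] [Module ℝ V] : ℂ ⊗[ℝ] V →ₗ[ℝ] V :=
  TensorProduct.lift ((LinearMap.lsmul ℝ V).comp Complex.reLm)

noncomputable def imMap (V : Type*) [AddCommGroup V] [Module ℝ V] : ℂ ⊗[ℝ] V →ₗ[ℝ] V :=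
  TensorProduct.lift ((LinearMap.lsmul ℝ V).comp Complex.imLm)

@[simp] lemma reMap_cplxVec (X Y : V) : reMap V (cplxVec X Y) = X := by
  simp [reMap, cplxVec]

@[simp] lemma imMap_cplxVec (X Y : V) : imMap V (cplxVec X Y) = Y := by
  simp [imMap, cplxVec]

lemma cplxVec_inj {X Y X' Y' : V} (h : cplxVec X Y = cplxVec X' Y') : X = X' ∧ Y = Y' := by
  constructor
  · have := congrArg (reMap V) h; simpa using this
  · have := congrArg (imMap V) h; simpa using this

lemma cplxVec_ne_zero {X Y : V} (h : X ≠ 0) : cplxVec X Y ≠ 0 := by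
  intro h0
  have : X = 0 := by
    have := congrArg (reMap V) h0; simpa using this
  exact h this

lemma conj_cplxVec (X Y : V) : complexConj V (cplxVec X Y) = cplxVec X (-Y) := by
  simp [complexConj, cplxVec, LinearMap.rTensor_tmul, Complex.conj_I, TensorProduct.neg_tmul,
    TensorProduct.tmul_neg]

lemma smul_cplxVec (r s : ℝ) (X Y : V) :
    ((r : ℂ) + (s : ℂ) * Complex.I) • cplxVec X Y
      = cplxVec (r • X - s • Y) (s • X + r • Y) := by
  have h1 : ((r : ℂ) + (s : ℂ) * Complex.I) = r • (1 : ℂ) + s • Complex.I := by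
    simp [Complex.real_smul]
  have h2 : ((r : ℂ) + (s : ℂ) * Complex.I) * Complex.I = (-s) • (1 : ℂ) + r • Complex.I := by
    rw [add_mul, mul_assoc, Complex.I_mul_I]; simp [Complex.real_smul]; ring
  unfold cplxVec
  rw [smul_add, TensorProduct.smul_tmul', TensorProduct.smul_tmul', smul_eq_mul, smul_eq_mul,
    mul_one, h2, h1, TensorProduct.add_tmul, TensorProduct.add_tmul]
  simp only [neg_smul, TensorProduct.neg_tmul, TensorProduct.smul_tmul,
    TensorProduct.tmul_sub, TensorProduct.tmul_add, TensorProduct.tmul_smul]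
  abel

lemma eval_cplxVec (b : LinearMap.BilinForm ℝ V) (X Y X' Y' : V) :
    (b.baseChange ℂ) (cplxVec X Y) (cplxVec X' Y')
      = ((b X X' - b Y Y' : ℝ) : ℂ) + ((b X Y' + b Y X' : ℝ) : ℂ) * Complex.I := by
  simp only [cplxVec, map_add, LinearMap.add_apply, LinearMap.BilinForm.baseChange_tmul]
  simp [Complex.real_smul, Complex.I_mul_I]
  ring

end Aux

section KR
variable {V : Type*} [AddCommGroup V] [Module ℝ V]

/-- Real reformulation of `kappaCond`. -/
def KR (b : LinearMap.BilinForm ℝ V) (X Y : V) : Prop :=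
  b X X = b Y Y ∧ b X Y = 0 ∧ 0 < b X X

lemma kappa_iff {b : LinearMap.BilinForm ℝ V} (hb : b.IsSymm) (X Y : V) :
    kappaCond b (cplxVec X Y) ↔ KR b X Y := by
  have hYX : b Y X = b X Y := (hb.eq X Y).symm
  constructor
  · rintro ⟨hne, h0, r, hr, hrr⟩
    rw [eval_cplxVec] at h0
    rw [conj_cplxVec, eval_cplxVec] at hrr
    have h0' : b X X - b Y Y = 0 ∧ b X Y + b Y X = 0 := by
      constructor
      · simpa using congrArg Complex.re h0
      · simpa using congrArg Complex.im h0
    have h1 : b X X + b Y Y = r := by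
      have := congrArg Complex.re hrr
      simpa using this
    have hXY : b X Y = 0 := by linarith [h0'.2]
    refine ⟨by linarith [h0'.1], hXY, by linarith [h0'.1]⟩
  · rintro ⟨h1, h2, h3⟩
    have hX : X ≠ 0 := by
      rintro rfl; simp at h3
    refine ⟨cplxVec_ne_zero hX, ?_, b X X + b Y Y, by linarith, ?_⟩
    · rw [eval_cplxVec]; simp [h1, h2, hYX]
    · rw [conj_cplxVec, eval_cplxVec]; simp [map_neg, h1, h2, hYX]

lemma KR.indep {b : LinearMap.BilinForm ℝ V} (hb : b.IsSymm) {X Y : V} (h : KR b X Y) :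
    ∀ s t : ℝ, s • X + t • Y = 0 → s = 0 ∧ t = 0 := by
  obtain ⟨h1, h2, h3⟩ := h
  have hYX : b Y X = 0 := by simpa [h2] using (hb.eq X Y).symm
  intro s t hst
  have hs : b (s • X + t • Y) X = s * b X X := by
    simp [map_smul, hYX, smul_eq_mul]
  have ht : b (s • X + t • Y) Y = t * b Y Y := by
    simp [map_smul, h2]  -- b X Y = 0? need b applied: (s•X + t•Y) paired with Y
  rw [hst] at hs ht
  simp only [map_zero, LinearMap.zero_apply] at hs ht
  have hs' := (mul_eq_zero.mp hs.symm)
  have ht' := (mul_eq_zero.mp ht.symm)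
  constructor
  · rcases hs' with hs' | hs'
    · exact hs'
    · exact absurd hs' h3.ne'
  · rcases ht' with ht' | ht'
    · exact ht'
    · rw [← h1] at ht'; exact absurd ht' h3.ne'

lemma KR.finrank_span {b : LinearMap.BilinForm ℝ V} (hb : b.IsSymm) {X Y : V} (h : KR b X Y) :
    Module.finrank ℝ (Submodule.span ℝ ({X, Y} : Set V)) = 2 := by
  have hind : LinearIndependent ℝ ![X, Y] := LinearIndependent.pair_iff.2 (h.indep hb)
  have hrange : Set.range ![X, Y] = {X, Y} := by
    ext z; simp [Matrix.range_cons, Matrix.range_empty]; tauto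
  rw [← hrange, finrank_span_eq_card hind]
  simp

lemma KR.posdef {b : LinearMap.BilinForm ℝ V} (hb : b.IsSymm) {X Y : V} (h : KR b X Y) :
    ∀ u ∈ Submodule.span ℝ ({X, Y} : Set V), u ≠ 0 → 0 < b u u := by
  obtain ⟨h1, h2, h3⟩ := h
  have hYX : b Y X = 0 := by simpa [h2] using (hb.eq X Y).symm
  intro u hu hne
  obtain ⟨m, n, rfl⟩ := Submodule.mem_span_pair.mp hu
  have hmn : m ≠ 0 ∨ n ≠ 0 := by
    by_contra hc
    push_neg at hc
    rcases hc with ⟨rfl, rfl⟩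
    simp at hne
  have : b (m • X + n • Y) (m • X + n • Y)
      = (m ^ 2 + n ^ 2) * b X X + (2 * m * n) * b X Y
        + n ^ 2 * (b Y Y - b X X) + m * n * (b Y X - b X Y) := by
    simp [map_add, map_smul, smul_eq_mul]
    ring
  have hmn2 : 0 < m ^ 2 + n ^ 2 := by
    rcases hmn with hm | hm
    · positivity
    · positivity
  rw [this, h2, hYX]
  nlinarith [mul_pos hmn2 h3, h1]

end KR

section Main
variable {V : Type*} [AddCommGroup V] [Module ℝ V] [FiniteDimensional ℝ V]

lemma span_eq_of_KR {b : LinearMap.BilinForm ℝ V} (hb : b.IsSymm) {X Y : V}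
    (h : KR b X Y) {P : Submodule ℝ V} (hX : X ∈ P) (hY : Y ∈ P)
    (hP2 : Module.finrank ℝ P = 2) : Submodule.span ℝ ({X, Y} : Set V) = P := by
  have hle : Submodule.span ℝ ({X, Y} : Set V) ≤ P := by
    rw [Submodule.span_le]
    intro z hz
    simp only [Set.mem_insert_iff, Set.mem_singleton_iff] at hz
    rcases hz with rfl | rfl
    · exact hX
    · exact hY
  exact Submodule.eq_of_le_of_finrank_eq hle (by rw [h.finrank_span hb, hP2])

lemma exists_KR_basis {b : LinearMap.BilinForm ℝ V} (hb : b.IsSymm)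
    (P : Submodule ℝ V) (hP2 : Module.finrank ℝ P = 2)
    (hPpos : ∀ u ∈ P, u ≠ 0 → 0 < b u u) :
    ∃ X Y : V, KR b X Y ∧ X ∈ P ∧ Y ∈ P := by
  set bP : Module.Basis (Fin 2) ℝ P := Module.finBasisOfFinrankEq ℝ P hP2 with hbP
  set e₁ : V := (bP 0 : V) with he₁def
  set e₂ : V := (bP 1 : V) with he₂def
  have he₁P : e₁ ∈ P := (bP 0).2
  have he₂P : e₂ ∈ P := (bP 1).2
  have he₁ : e₁ ≠ 0 := by
    intro h0
    exact bP.ne_zero 0 (Subtype.ext h0)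
  have hs : 0 < b e₁ e₁ := hPpos e₁ he₁P he₁
  set t : ℝ := b e₁ e₂ / b e₁ e₁ with ht
  set Y₀ : V := e₂ - t • e₁ with hY₀def
  have hY₀P : Y₀ ∈ P := P.sub_mem he₂P (P.smul_mem t he₁P)
  have hY₀ne : Y₀ ≠ 0 := by
    intro h0
    have he2 : e₂ = t • e₁ := by
      have := sub_eq_zero.mp h0
      exact this
    have hrel : (t : ℝ) • bP 0 + (-1 : ℝ) • bP 1 = 0 := by
      apply Subtype.ext
      push_cast [Submodule.coe_smul, Submodule.coe_add]
      rw [← he₁def, ← he₂def] at *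
      simp [he2]
    have := Fintype.linearIndependent_iff.mp bP.linearIndependent ![t, -1] ?_ 1
    · simp at this
    · simpa [Fin.sum_univ_two] using hrel
  have hq₀ : 0 < b Y₀ Y₀ := hPpos Y₀ hY₀P hY₀ne
  have hXY₀ : b e₁ Y₀ = 0 := by
    rw [hY₀def]
    simp only [map_sub, map_smul, smul_eq_mul]
    rw [ht]
    field_simp
    ring
  set c : ℝ := Real.sqrt (b e₁ e₁ / b Y₀ Y₀) with hc
  have hc2 : c ^ 2 = b e₁ e₁ / b Y₀ Y₀ := Real.sq_sqrt (by positivity)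
  refine ⟨e₁, c • Y₀, ⟨?_, ?_, hs⟩, he₁P, P.smul_mem c hY₀P⟩
  · have h2 : b (c • Y₀) (c • Y₀) = c ^ 2 * b Y₀ Y₀ := by
      simp only [map_smul, LinearMap.smul_apply, smul_eq_mul]; ring
    rw [h2, hc2]
    field_simp
  · rw [map_smul, smul_eq_mul, hXY₀, mul_zero]

end Main

/-- For `[v] ∈ κ` with `v = X + iY`, the plane `ℝX + ℝY` is `2`-dimensional and `b` is
positive definite on it; the resulting map `κ → Grass(V)` is surjective and each fibre
consists of exactly two classes. -/
theorem stmt2 (V : Type*) [AddCommGroup V] [Module ℝ V] [FiniteDimensional ℝ V]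
    (b : LinearMap.BilinForm ℝ V) (hb : b.IsSymm)
    -- signature (2, n):
    (P₀ N₀ : Submodule ℝ V) (hPN : IsCompl P₀ N₀)
    (horth : ∀ p ∈ P₀, ∀ ν ∈ N₀, b p ν = 0)
    (hdim : Module.finrank ℝ P₀ = 2)
    (hpos : ∀ p ∈ P₀, p ≠ 0 → 0 < b p p)
    (hneg : ∀ ν ∈ N₀, ν ≠ 0 → b ν ν < 0) :
    -- the map to the Grassmannian is well defined:
    (∀ X Y : V, kappaCond b (cplxVec X Y) →
      Module.finrank ℝ (Submodule.span ℝ {X, Y}) = 2 ∧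
        ∀ u ∈ Submodule.span ℝ {X, Y}, u ≠ 0 → 0 < b u u) ∧
    -- it is surjective, with exactly two classes in each fibre:
    (∀ P : Submodule ℝ V, Module.finrank ℝ P = 2 → (∀ u ∈ P, u ≠ 0 → 0 < b u u) →
      ∃ X Y X' Y' : V,
        kappaCond b (cplxVec X Y) ∧ Submodule.span ℝ {X, Y} = P ∧
        kappaCond b (cplxVec X' Y') ∧ Submodule.span ℝ {X', Y'} = P ∧
        (¬ ∃ c : ℂ, cplxVec X' Y' = c • cplxVec X Y) ∧
        ∀ X'' Y'' : V, kappaCond b (cplxVec X'' Y'') → Submodule.span ℝ {X'', Y''} = P →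
          (∃ c : ℂ, cplxVec X'' Y'' = c • cplxVec X Y) ∨
          (∃ c : ℂ, cplxVec X'' Y'' = c • cplxVec X' Y')) := by
  constructor
  · intro X Y hκ
    have h := (kappa_iff hb X Y).mp hκ
    exact ⟨h.finrank_span hb, h.posdef hb⟩
  · intro P hP2 hPpos
    obtain ⟨X, Y, hKR, hXP, hYP⟩ := exists_KR_basis hb P hP2 hPpos
    obtain ⟨h1, h2, h3⟩ := id hKR
    have hYX : b Y X = 0 := by simpa [h2] using (hb.eq X Y).symm
    have hKR' : KR b X (-Y) := by
      refine ⟨by simpa using h1, by simp [h2], h3⟩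
    refine ⟨X, Y, X, -Y, (kappa_iff hb X Y).mpr hKR, span_eq_of_KR hb hKR hXP hYP hP2,
      (kappa_iff hb X (-Y)).mpr hKR', span_eq_of_KR hb hKR' hXP (P.neg_mem hYP) hP2, ?_, ?_⟩
    · rintro ⟨c, hc⟩
      rw [← Complex.re_add_im c, smul_cplxVec] at hc
      obtain ⟨hcX, hcY⟩ := cplxVec_inj hc
      have h0 : c.re • X - c.im • Y - X = 0 := sub_eq_zero.mpr hcX.symm
      have h0' : c.im • X + c.re • Y + Y = 0 := by rw [← hcY]; simp
      have hrel1 : (c.re - 1) • X + (-c.im) • Y = 0 := by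
        linear_combination (norm := module) h0
      have hrel2 : c.im • X + (c.re + 1) • Y = 0 := by
        linear_combination (norm := module) h0'
      obtain ⟨ha1, ha2⟩ := hKR.indep hb _ _ hrel1
      obtain ⟨hb1, hb2⟩ := hKR.indep hb _ _ hrel2
      have : c.re = 1 := by linarith
      have : c.re = -1 := by linarith
      linarith
    · intro X'' Y'' hκ'' hspan''
      have hKR'' := (kappa_iff hb X'' Y'').mp hκ''
      have hX''P : X'' ∈ Submodule.span ℝ ({X, Y} : Set V) := by
        rw [span_eq_of_KR hb hKR hXP hYP hP2, ← hspan'']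
        exact Submodule.subset_span (by simp)
      have hY''P : Y'' ∈ Submodule.span ℝ ({X, Y} : Set V) := by
        rw [span_eq_of_KR hb hKR hXP hYP hP2, ← hspan'']
        exact Submodule.subset_span (by simp)
      obtain ⟨a, b', hab⟩ := Submodule.mem_span_pair.mp hX''P
      obtain ⟨cc, d, hcd⟩ := Submodule.mem_span_pair.mp hY''P
      obtain ⟨k1, k2, k3⟩ := hKR''
      -- evaluate the form on combinations
      have hqX'' : b X'' X'' = (a ^ 2 + b' ^ 2) * b X X := by
        rw [← hab]
        simp only [map_add, map_smul, LinearMap.add_apply, LinearMap.smul_apply, smul_eq_mul,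
          h2, hYX, ← h1]
        ring
      have hqY'' : b Y'' Y'' = (cc ^ 2 + d ^ 2) * b X X := by
        rw [← hcd]
        simp only [map_add, map_smul, LinearMap.add_apply, LinearMap.smul_apply, smul_eq_mul,
          h2, hYX, ← h1]
        ring
      have hcross : b X'' Y'' = (a * cc + b' * d) * b X X := by
        rw [← hab, ← hcd]
        simp only [map_add, map_smul, LinearMap.add_apply, LinearMap.smul_apply, smul_eq_mul,
          h2, hYX, ← h1]
        ring
      have hn : a ^ 2 + b' ^ 2 = cc ^ 2 + d ^ 2 := by
        have := k1
        rw [hqX'', hqY''] at this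
        exact mul_right_cancel₀ h3.ne' this
      have hac : a * cc + b' * d = 0 := by
        have := k2
        rw [hcross] at this
        rcases mul_eq_zero.mp this with h | h
        · exact h
        · exact absurd h h3.ne'
      have hposab : 0 < a ^ 2 + b' ^ 2 := by
        have := k3
        rw [hqX''] at this
        nlinarith
      have hd2 : d ^ 2 = a ^ 2 := by
        have hkey : (d ^ 2 - a ^ 2) * (a ^ 2 + b' ^ 2) = 0 := by
          linear_combination (-(a ^ 2)) * hn + (b' * d - a * cc) * hac
        rcases mul_eq_zero.mp hkey with h | h
        · linarith
        · exact absurd h hposab.ne'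
      have hda : d = a ∨ d = -a := by
        have : (d - a) * (d + a) = 0 := by linear_combination hd2
        rcases mul_eq_zero.mp this with h | h
        · left; linarith
        · right; linarith
      have hc2' : cc ^ 2 = b' ^ 2 := by nlinarith
      have hcb : cc = b' ∨ cc = -b' := by
        have : (cc - b') * (cc + b') = 0 := by linear_combination hc2'
        rcases mul_eq_zero.mp this with h | h
        · left; linarith
        · right; linarith
      -- reduce to the two clean cases
      have hcases : (cc = -b' ∧ d = a) ∨ (cc = b' ∧ d = -a) := by
        rcases hcb with hcb | hcb <;> rcases hda with hda | hda
        · -- cc = b', d = a : 2ab' = 0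
          have h2ab : a * b' = 0 := by
            rw [hcb, hda] at hac; linear_combination hac / 2
          rcases mul_eq_zero.mp h2ab with h | h
          · right; constructor
            · exact hcb
            · rw [hda, h]; ring
          · left; constructor
            · rw [hcb, h]; ring
            · exact hda
        · right; exact ⟨hcb, hda⟩
        · left; exact ⟨hcb, hda⟩
        · -- cc = -b', d = -a : 2ab' = 0
          have h2ab : a * b' = 0 := by
            rw [hcb, hda] at hac; linear_combination (-1/2 : ℝ) * hac
          rcases mul_eq_zero.mp h2ab with h | h
          · left; constructor
            · exact hcb
            · rw [hda, h]; ring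
          · right; constructor
            · rw [hcb, h]; ring
            · rw [hda]
      rcases hcases with ⟨hc1, hd1⟩ | ⟨hc1, hd1⟩
      · left
        refine ⟨(a : ℂ) + ((-b' : ℝ) : ℂ) * Complex.I, ?_⟩
        rw [smul_cplxVec]
        have e1 : a • X - (-b') • Y = X'' := by rw [← hab]; module
        have e2 : (-b') • X + a • Y = Y'' := by rw [← hcd, hc1, hd1]
        rw [e1, e2]
      · right
        refine ⟨(a : ℂ) + ((b' : ℝ) : ℂ) * Complex.I, ?_⟩
        rw [smul_cplxVec]
        have e1 : a • X - b' • (-Y) = X'' := by rw [← hab]; module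
        have e2 : b' • X + a • (-Y) = Y'' := by rw [← hcd, hc1, hd1]; module
        rw [e1, e2]
end

section
/- Assume b is negative definite on T^⊥, i.e. b(w, w) < 0 for every nonzero w ∈ T^⊥. If g τ = τ (via the ℂ-linear extension of g), then g x = x for every x ∈ S. (This is the computation showing ker(χ_τ) = Γ̃_{S^⊥} for the stabilizer of a point τ of the orthogonal symmetric domain.) -/
/-!
Reading off real and imaginary parts, `g τ = τ` says that `g` fixes `X` and `Y`. Then `g` and
`g⁻¹` preserve `T^⊥`, so for `x ∈ S` the vector `w = g x - x` lies in `T^⊥` and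
`b(w, w) = b(x, g⁻¹ w) - b(x, w) = 0`; negative definiteness forces `w = 0`.
-/

open scoped TensorProduct

theorem Complex.one_tmul_add_I_tmul_inj {V : Type*} [AddCommGroup V] [Module ℝ V]
    {X Y X' Y' : V} :
    (1 : ℂ) ⊗ₜ[ℝ] X + Complex.I ⊗ₜ[ℝ] Y = (1 : ℂ) ⊗ₜ[ℝ] X' + Complex.I ⊗ₜ[ℝ] Y' ↔
      X = X' ∧ Y = Y' := by
  refine ⟨fun h => ?_, fun ⟨hX, hY⟩ => hX ▸ hY ▸ rfl⟩
  have hpart (f : ℂ →ₗ[ℝ] ℝ) : f 1 • X + f Complex.I • Y = f 1 • X' + f Complex.I • Y' := by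
    simpa using congrArg (fun t => TensorProduct.lid ℝ V (f.rTensor V t)) h
  exact ⟨by simpa using hpart Complex.reLm, by simpa using hpart Complex.imLm⟩

theorem LinearEquiv.symm_mem_of_image_eq {R V : Type*} [Semiring R] [AddCommMonoid V]
    [Module R V] (e : V ≃ₗ[R] V) {s : Set V} (hs : (fun x => e x) '' s = s) {v : V}
    (hv : v ∈ s) : e.symm v ∈ s := by
  rw [← hs, show (fun x => e x) = ⇑e from rfl, e.image_eq_preimage_symm] at hv
  exact hv

section Isometry

variable {R V : Type*} [CommRing R] [AddCommGroup V] [Module R V]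
  {b : LinearMap.BilinForm R V} {g : V ≃ₗ[R] V}

theorem apply_left_eq_symm_apply_right (hg : ∀ x y, b (g x) (g y) = b x y) (x y : V) :
    b (g x) y = b x (g.symm y) := by
  simpa using hg x (g.symm y)

theorem symm_apply_left_eq_apply_right (hg : ∀ x y, b (g x) (g y) = b x y) (x y : V) :
    b (g.symm x) y = b x (g y) := by
  simpa using (hg (g.symm x) y).symm

theorem eq_of_sub_mem_of_anisotropic (hg : ∀ x y, b (g x) (g y) = b x y) {W : Set V}
    (hW : ∀ w ∈ W, g.symm w ∈ W) (hanis : ∀ w ∈ W, b w w = 0 → w = 0) {x : V}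
    (hx : ∀ w ∈ W, b x w = 0) (hgx : g x - x ∈ W) : g x = x := by
  have hself : b (g x - x) (g x - x) = 0 := by
    rw [LinearMap.map_sub₂, apply_left_eq_symm_apply_right hg, hx _ (hW _ hgx), hx _ hgx,
      sub_zero]
  exact sub_eq_zero.mp (hanis _ hgx hself)

end Isometry

theorem stmt8_general (V : Type*) [AddCommGroup V] [Module ℝ V]
    (b : LinearMap.BilinForm ℝ V)
    (g : V ≃ₗ[ℝ] V) (hg : ∀ x y : V, b (g x) (g y) = b x y)
    (L : AddSubgroup V) (hgL : (fun x => g x) '' (L : Set V) = (L : Set V))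
    (X Y : V) (τ : ℂ ⊗[ℝ] V) (hτ : τ = (1 : ℂ) ⊗ₜ[ℝ] X + Complex.I ⊗ₜ[ℝ] Y)
    (Tperp S : Set V)
    (hT : Tperp = {x : V | x ∈ L ∧ b x X = 0 ∧ b x Y = 0})
    (hS : S = {x : V | x ∈ L ∧ ∀ w ∈ Tperp, b x w = 0})
    (hnegdef : ∀ w ∈ Tperp, w ≠ 0 → b w w < 0)
    (heig : LinearMap.baseChange ℂ (g : V →ₗ[ℝ] V) τ = τ) :
    ∀ x ∈ S, g x = x := by
  subst hS hτ
  rintro x ⟨hxL, hxS⟩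
  obtain ⟨hgX, hgY⟩ : g X = X ∧ g Y = Y := by
    simpa [Complex.one_tmul_add_I_tmul_inj] using heig
  have hTsymm : ∀ w ∈ Tperp, g.symm w ∈ Tperp := by
    rintro w hw
    rw [hT] at hw ⊢
    obtain ⟨hwL, hwX, hwY⟩ := hw
    refine ⟨g.symm_mem_of_image_eq hgL hwL, ?_, ?_⟩
    · rw [symm_apply_left_eq_apply_right hg, hgX, hwX]
    · rw [symm_apply_left_eq_apply_right hg, hgY, hwY]
  have hmoved : g x - x ∈ Tperp := by
    rw [hT]
    refine ⟨L.sub_mem (hgL.subset ⟨x, hxL, rfl⟩) hxL, ?_, ?_⟩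
    · rw [LinearMap.map_sub₂, ← hgX, hg, hgX, sub_self]
    · rw [LinearMap.map_sub₂, ← hgY, hg, hgY, sub_self]
  refine eq_of_sub_mem_of_anisotropic hg hTsymm (fun w hw hww => ?_) hxS hmoved
  by_contra hw0
  exact (hnegdef w hw hw0).ne hww

/-- If `b` is negative definite on `T^⊥` and the `ℂ`-linear extension of the isometry `g`
fixes `τ`, then `g` fixes every element of `S`.  (This shows `ker(χ_τ) = Γ̃_{S^⊥}`.) -/
theorem stmt8 (V : Type*) [AddCommGroup V] [Module ℝ V] [FiniteDimensional ℝ V]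
    (b : LinearMap.BilinForm ℝ V) (hb : b.IsSymm)
    (g : V ≃ₗ[ℝ] V) (hg : ∀ x y : V, b (g x) (g y) = b x y)
    (L : AddSubgroup V) (hgL : (fun x => g x) '' (L : Set V) = (L : Set V))
    (X Y : V) (τ : ℂ ⊗[ℝ] V) (hτ : τ = (1 : ℂ) ⊗ₜ[ℝ] X + Complex.I ⊗ₜ[ℝ] Y)
    (Tperp S : Set V)
    (hT : Tperp = {x : V | x ∈ L ∧ b x X = 0 ∧ b x Y = 0})
    (hS : S = {x : V | x ∈ L ∧ ∀ w ∈ Tperp, b x w = 0})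
    (hnegdef : ∀ w ∈ Tperp, w ≠ 0 → b w w < 0)
    (heig : LinearMap.baseChange ℂ (g : V →ₗ[ℝ] V) τ = τ) :
    ∀ x ∈ S, g x = x :=
  stmt8_general V b g hg L hgL X Y τ hτ Tperp S hT hS hnegdef heig
end

section
/- Assume b is negative definite on T^⊥, i.e. b(w, w) < 0 for every nonzero w ∈ T^⊥. Suppose g τ = λ τ for some λ ∈ ℂ with λ ≠ 1 (via the ℂ-linear extension of g). Then the only x ∈ S with g x = x is x = 0. (There are no trivial eigenvectors for the induced action of the cyclic group generated by g on S.) -/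
open scoped TensorProduct

/-!
If `g x = x`, the functional `b x` is `g`-invariant, so its complexification takes the same value
at `τ` and at `g τ = λ τ`; as `λ ≠ 1` it vanishes at `τ`, i.e. `b x X = b x Y = 0`. Thus `x ∈ T^⊥`,
and `x ∈ S` gives `b x x = 0`, which negative definiteness on `T^⊥` allows only for `x = 0`.
-/

theorem LinearMap.BilinForm.apply_comp_eq_of_isometry_of_fixed {R M : Type*} [CommRing R]
    [AddCommGroup M] [Module R M] {b : LinearMap.BilinForm R M} {g : M →ₗ[R] M}
    (hg : ∀ x y : M, b (g x) (g y) = b x y) {x : M} (hx : g x = x) :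
    b x ∘ₗ g = b x :=
  LinearMap.ext fun v => by rw [LinearMap.comp_apply, ← hg x v, hx]

theorem LinearMap.baseChange_apply_eq_zero_of_comp_eq {R A M N : Type*} [CommRing R]
    [Field A] [Algebra R A] [AddCommGroup M] [Module R M] [AddCommGroup N] [Module R N]
    {f : M →ₗ[R] N} {g : M →ₗ[R] M} (hf : f ∘ₗ g = f) {τ : A ⊗[R] M} {lam : A}
    (hlam : lam ≠ 1) (heig : g.baseChange A τ = lam • τ) :
    f.baseChange A τ = 0 := by
  have h : f.baseChange A τ = lam • f.baseChange A τ := by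
    rw [← map_smul, ← heig, ← LinearMap.comp_apply, ← LinearMap.baseChange_comp, hf]
  have h' : (1 - lam) • f.baseChange A τ = 0 := by
    linear_combination (norm := module) h
  exact (smul_eq_zero.mp h').resolve_left (sub_ne_zero.mpr hlam.symm)

theorem Complex.one_tmul_add_I_tmul_eq_zero_iff (a b : ℝ) :
    (1 : ℂ) ⊗ₜ[ℝ] a + Complex.I ⊗ₜ[ℝ] b = 0 ↔ a = 0 ∧ b = 0 := by
  refine ⟨fun h => ?_, fun ⟨ha, hb⟩ => by simp [ha, hb]⟩
  have h' := congrArg (TensorProduct.rid ℝ ℂ) h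
  simp only [map_add, TensorProduct.rid_tmul, map_zero] at h'
  exact ⟨by simpa using congrArg Complex.re h', by simpa using congrArg Complex.im h'⟩

theorem stmt9_general (V : Type*) [AddCommGroup V] [Module ℝ V]
    (b : LinearMap.BilinForm ℝ V)
    (g : V ≃ₗ[ℝ] V) (hg : ∀ x y : V, b (g x) (g y) = b x y)
    (L : AddSubgroup V)
    (X Y : V) (τ : ℂ ⊗[ℝ] V) (hτ : τ = (1 : ℂ) ⊗ₜ[ℝ] X + Complex.I ⊗ₜ[ℝ] Y)
    (Tperp S : Set V)
    (hT : Tperp = {x : V | x ∈ L ∧ b x X = 0 ∧ b x Y = 0})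
    (hS : S = {x : V | x ∈ L ∧ ∀ w ∈ Tperp, b x w = 0})
    (hnegdef : ∀ w ∈ Tperp, w ≠ 0 → b w w < 0)
    (lam : ℂ) (hlam : lam ≠ 1)
    (heig : LinearMap.baseChange ℂ (g : V →ₗ[ℝ] V) τ = lam • τ) :
    ∀ x ∈ S, g x = x → x = 0 := by
  subst hτ hT hS
  rintro x ⟨hxL, hxS⟩ hfix
  have hpair : (b x).baseChange ℂ ((1 : ℂ) ⊗ₜ[ℝ] X + Complex.I ⊗ₜ[ℝ] Y) = 0 :=
    LinearMap.baseChange_apply_eq_zero_of_comp_eq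
      (LinearMap.BilinForm.apply_comp_eq_of_isometry_of_fixed (g := (g : V →ₗ[ℝ] V)) hg hfix)
      hlam heig
  rw [map_add, LinearMap.baseChange_tmul, LinearMap.baseChange_tmul,
    Complex.one_tmul_add_I_tmul_eq_zero_iff] at hpair
  have hxT : x ∈ {w : V | w ∈ L ∧ b w X = 0 ∧ b w Y = 0} := ⟨hxL, hpair⟩
  by_contra hx0
  exact (hnegdef x hxT hx0).ne (hxS x hxT)

/-- If `b` is negative definite on `T^⊥` and the `ℂ`-linear extension of the isometry `g`
satisfies `gτ = λτ` with `λ ≠ 1`, then the only element of `S` fixed by `g` is `0`: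
there are no trivial eigenvectors for the induced action on `S`. -/
theorem stmt9 (V : Type*) [AddCommGroup V] [Module ℝ V] [FiniteDimensional ℝ V]
    (b : LinearMap.BilinForm ℝ V) (hb : b.IsSymm)
    (g : V ≃ₗ[ℝ] V) (hg : ∀ x y : V, b (g x) (g y) = b x y)
    (L : AddSubgroup V) (hgL : (fun x => g x) '' (L : Set V) = (L : Set V))
    (X Y : V) (τ : ℂ ⊗[ℝ] V) (hτ : τ = (1 : ℂ) ⊗ₜ[ℝ] X + Complex.I ⊗ₜ[ℝ] Y)
    (Tperp S : Set V)
    (hT : Tperp = {x : V | x ∈ L ∧ b x X = 0 ∧ b x Y = 0})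
    (hS : S = {x : V | x ∈ L ∧ ∀ w ∈ Tperp, b x w = 0})
    (hnegdef : ∀ w ∈ Tperp, w ≠ 0 → b w w < 0)
    (lam : ℂ) (hlam : lam ≠ 1)
    (heig : LinearMap.baseChange ℂ (g : V →ₗ[ℝ] V) τ = lam • τ) :
    ∀ x ∈ S, g x = x → x = 0 :=
  stmt9_general V b g hg L X Y τ hτ Tperp S hT hS hnegdef lam hlam heig
end

section
/- Let p be a prime and n ≥ 1, and suppose that p does not divide Φ_ℓ(1) for every integer ℓ ≥ 2 with deg(Φ_ℓ) = φ(ℓ) ≤ n. If g ∈ GL_n(ℤ) satisfies g ≡ I (mod p), then every eigenvalue of g (in ℂ) which is a root of unity equals 1. (This is the eigenvalue form of Borel's criterion that the principal congruence subgroup Γ(p) ⊆ GL_n(ℤ) is neat.) -/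
/-!
Let `ℓ` be the order of the eigenvalue `z`. Then `Φ_ℓ`, the minimal polynomial of `z` over `ℤ`,
divides the integer characteristic polynomial of `g`, so `φ(ℓ) ≤ n`. Modulo `p` that characteristic
polynomial is `(X - 1)^n` because `g ≡ I`, so the reduction of `Φ_ℓ` is a nonconstant divisor of
`(X - 1)^n`, hence vanishes at `1`: that is, `p ∣ Φ_ℓ(1)`. The hypothesis then forces `ℓ = 1`.
-/

open Polynomial

theorem Polynomial.eval_eq_zero_of_dvd_X_sub_C_pow {R : Type*} [CommRing R] [IsDomain R]
    {q : R[X]} {a : R} {n : ℕ} (hq : ¬IsUnit q) (h : q ∣ (X - C a) ^ n) : q.eval a = 0 := by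
  obtain ⟨m, -, hm⟩ := (dvd_prime_pow (prime_X_sub_C a) n).1 h
  have hm0 : m ≠ 0 := by
    rintro rfl
    exact hq (hm.isUnit_iff.2 (isUnit_one.pow 0))
  obtain ⟨u, rfl⟩ := hm.symm
  simp [zero_pow hm0]

namespace Matrix

variable {ι : Type*} [DecidableEq ι]

theorem map_intCast_eq_one_of_dvd_sub_one {p : ℕ} {M : Matrix ι ι ℤ}
    (h : ∀ i j, (p : ℤ) ∣ M i j - (1 : Matrix ι ι ℤ) i j) :
    M.map (Int.castRingHom (ZMod p)) = 1 := by
  ext i j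
  have hij := (ZMod.intCast_eq_intCast_iff_dvd_sub _ _ p).2 (h i j)
  rw [map_apply, eq_intCast, ← hij]
  by_cases hij' : i = j <;> simp [one_apply, hij']

variable [Fintype ι]

theorem dvd_eval_one_of_dvd_charpoly {p : ℕ} [Fact p.Prime] {M : Matrix ι ι ℤ}
    (hM : M.map (Int.castRingHom (ZMod p)) = 1) {q : ℤ[X]} (hq : q.Monic)
    (hdeg : 0 < q.natDegree) (hdvd : q ∣ M.charpoly) : (p : ℤ) ∣ q.eval 1 := by
  have hred : q.map (Int.castRingHom (ZMod p)) ∣ (X - C 1) ^ Fintype.card ι := by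
    rw [C_1, ← charpoly_one, ← hM, charpoly_map]
    exact Polynomial.map_dvd _ hdvd
  have hunit : ¬IsUnit (q.map (Int.castRingHom (ZMod p))) := fun hu ↦ by
    have := natDegree_eq_zero_of_isUnit hu
    rw [hq.natDegree_map] at this
    omega
  rw [← ZMod.intCast_zmod_eq_zero_iff_dvd, ← eq_intCast (Int.castRingHom (ZMod p)),
    ← eval_one_map]
  exact eval_eq_zero_of_dvd_X_sub_C_pow hunit hred

theorem cyclotomic_orderOf_dvd_charpoly {K : Type*} [Field K] [CharZero K] {M : Matrix ι ι ℤ}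
    {z : K} (hz : (M.map (Int.castRingHom K)).charpoly.IsRoot z) (hfin : IsOfFinOrder z) :
    cyclotomic (orderOf z) ℤ ∣ M.charpoly := by
  have hprim := IsPrimitiveRoot.orderOf z
  rw [cyclotomic_eq_minpoly hprim hfin.orderOf_pos]
  refine minpoly.isIntegrallyClosed_dvd (hprim.isIntegral hfin.orderOf_pos) ?_
  rwa [aeval_def, eval₂_eq_eval_map, ← charpoly_map]

end Matrix

theorem stmt11_general (p : ℕ) (hp : p.Prime) (n : ℕ)
    (hΦ : ∀ ℓ : ℕ, 2 ≤ ℓ → ℓ.totient ≤ n →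
      ¬ ((p : ℤ) ∣ (Polynomial.cyclotomic ℓ ℤ).eval 1))
    (g : GL (Fin n) ℤ)
    (hg : ∀ i j : Fin n, (p : ℤ) ∣ ((g : Matrix (Fin n) (Fin n) ℤ) i j -
      (1 : Matrix (Fin n) (Fin n) ℤ) i j))
    (z : ℂ)
    (hz : (((g : Matrix (Fin n) (Fin n) ℤ).map (fun x : ℤ => (x : ℂ))).charpoly).IsRoot z)
    (hroot : ∃ k : ℕ, 0 < k ∧ z ^ k = 1) :
    z = 1 := by
  have : Fact p.Prime := ⟨hp⟩
  obtain ⟨k, hk, hzk⟩ := hroot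
  have hfin : IsOfFinOrder z := isOfFinOrder_iff_pow_eq_one.2 ⟨k, hk, hzk⟩
  have hdvd := Matrix.cyclotomic_orderOf_dvd_charpoly hz hfin
  by_contra hz1
  have hℓ : 2 ≤ orderOf z := by
    have := hfin.orderOf_pos
    have : orderOf z ≠ 1 := orderOf_eq_one_iff.not.2 hz1
    omega
  have htot : (orderOf z).totient ≤ n := by
    simpa [natDegree_cyclotomic] using natDegree_le_of_dvd hdvd (Matrix.charpoly_monic _).ne_zero
  have hdeg : 0 < (cyclotomic (orderOf z) ℤ).natDegree := by
    rw [natDegree_cyclotomic]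
    exact Nat.totient_pos.2 hfin.orderOf_pos
  exact hΦ _ hℓ htot <| Matrix.dvd_eval_one_of_dvd_charpoly
    (Matrix.map_intCast_eq_one_of_dvd_sub_one hg) (cyclotomic.monic _ ℤ) hdeg hdvd

/-- Borel's neatness criterion in eigenvalue form: if the prime `p` does not divide
`Φ_ℓ(1)` for every `ℓ ≥ 2` with `deg Φ_ℓ = φ(ℓ) ≤ n`, and `g ∈ GL_n(ℤ)` satisfies
`g ≡ I (mod p)`, then every eigenvalue of `g` in `ℂ` which is a root of unity equals `1`. -/
theorem stmt11 (p : ℕ) (hp : p.Prime) (n : ℕ) (hn : 1 ≤ n)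
    (hΦ : ∀ ℓ : ℕ, 2 ≤ ℓ → ℓ.totient ≤ n →
      ¬ ((p : ℤ) ∣ (Polynomial.cyclotomic ℓ ℤ).eval 1))
    (g : GL (Fin n) ℤ)
    (hg : ∀ i j : Fin n, (p : ℤ) ∣ ((g : Matrix (Fin n) (Fin n) ℤ) i j -
      (1 : Matrix (Fin n) (Fin n) ℤ) i j))
    (z : ℂ)
    (hz : (((g : Matrix (Fin n) (Fin n) ℤ).map (fun x : ℤ => (x : ℂ))).charpoly).IsRoot z)
    (hroot : ∃ k : ℕ, 0 < k ∧ z ^ k = 1) :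
    z = 1 :=
  stmt11_general p hp n hΦ g hg z hz hroot
end

section
/- Let A' be a symmetric complex n × n matrix, z ∈ ℂⁿ, and let Z be the n × 2 complex matrix whose first column is z and whose second column is −i·z. Set M = fromBlocks 0 (−(1/2) Zᵀ A') Z 0, a (2+n) × (2+n) complex matrix. Then M² = −(1/2)(zᵀ A' z) · fromBlocks P 0 0 0, where P is the 2 × 2 matrix with rows (1, −i) and (−i, −1), and M³ = 0. (This is the nilpotency computation used to exponentiate the abelian Lie subalgebra p₊ in the bounded-domain realization of the O(2,n) symmetric space.) -/
open Matrix

/-- The nilpotency computation for `p₊` in the bounded-domain realization of the O(2,n)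
symmetric space: with `Z` the `n × 2` matrix with columns `z` and `−i·z`, and
`M = (0, −(1/2)ZᵀA'; Z, 0)`, one has `M² = −(1/2)(zᵀA'z) · (P 0; 0 0)` where
`P = (1, −i; −i, −1)`, and `M³ = 0`. -/
theorem stmt14 (n : ℕ) (A' : Matrix (Fin n) (Fin n) ℂ) (hA' : A'.IsSymm)
    (z : Fin n → ℂ)
    (Z : Matrix (Fin n) (Fin 2) ℂ)
    (hZ : ∀ i : Fin n, Z i 0 = z i ∧ Z i 1 = -Complex.I * z i)
    (M : Matrix (Fin 2 ⊕ Fin n) (Fin 2 ⊕ Fin n) ℂ)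
    (hM : M = Matrix.fromBlocks 0 (-(1 / 2 : ℂ) • (Zᵀ * A')) Z 0)
    (P : Matrix (Fin 2) (Fin 2) ℂ)
    (hP : P = !![1, -Complex.I; -Complex.I, -1]) :
    M * M = (-(1 / 2 : ℂ) * (z ⬝ᵥ A'.mulVec z)) • Matrix.fromBlocks P 0 0 0 ∧
      M * M * M = 0 := by
  set μ : Fin 2 → ℂ := ![1, -Complex.I] with hμdef
  have hμ : ∀ (i : Fin n) (a : Fin 2), Z i a = μ a * z i := by
    intro i a
    fin_cases a
    · simp [hμdef, (hZ i).1]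
    · simp [hμdef, (hZ i).2]
  have hPμ : ∀ a b : Fin 2, P a b = μ a * μ b := by
    intro a b
    fin_cases a <;> fin_cases b <;>
      simp [hP, hμdef, Complex.I_mul_I] <;> ring_nf <;>
      simp [Complex.I_sq]
  have hZZ : Z * Zᵀ = 0 := by
    ext i j
    simp only [mul_apply, transpose_apply, Fin.sum_univ_two, hμ, hμdef,
      Matrix.zero_apply, Matrix.cons_val_zero, Matrix.cons_val_one, Matrix.head_cons]
    ring_nf
    simp [Complex.I_sq]
  have key : Zᵀ * (A' * Z) = (z ⬝ᵥ A'.mulVec z) • P := by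
    have inner : ∀ (i : Fin n) (c : ℂ),
        (∑ j, A' i j * (c * z j)) = c * ∑ j, A' i j * z j := by
      intro i c
      rw [Finset.mul_sum]
      exact Finset.sum_congr rfl fun j _ => by ring
    ext a b
    simp only [mul_apply, transpose_apply, hμ, inner, Matrix.smul_apply, smul_eq_mul, hPμ, dotProduct, mulVec]
    rw [Finset.sum_mul]
    exact Finset.sum_congr rfl fun i _ => by ring
  have hZB : Z * (-(1 / 2 : ℂ) • (Zᵀ * A')) = 0 := by
    rw [Matrix.mul_smul, ← Matrix.mul_assoc, hZZ, Matrix.zero_mul, smul_zero]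
  have hM2 : M * M = (-(1 / 2 : ℂ) * (z ⬝ᵥ A'.mulVec z)) • Matrix.fromBlocks P 0 0 0 := by
    rw [hM, Matrix.fromBlocks_multiply]
    simp only [Matrix.mul_zero, Matrix.zero_mul, zero_add, add_zero, hZB]
    rw [Matrix.smul_mul, Matrix.mul_assoc, key]
    rw [smul_smul]
    ext (i | i) (j | j) <;>
      simp [Matrix.fromBlocks]
  refine ⟨hM2, ?_⟩
  have hM3 : M * (M * M) = 0 := by
    rw [hM2, hM, Matrix.mul_smul, Matrix.fromBlocks_multiply]
    simp only [Matrix.mul_zero, Matrix.zero_mul, zero_add, add_zero]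
    have hZP : Z * P = 0 := by
      ext i b
      simp only [mul_apply, Fin.sum_univ_two, hμ, hPμ, hμdef, Matrix.zero_apply,
        Matrix.cons_val_zero, Matrix.cons_val_one, Matrix.head_cons]
      ring_nf
      simp [Complex.I_sq]
    rw [hZP]
    simp
  rw [← Matrix.mul_assoc] at hM3
  exact hM3
end

section
/- Let V be a finite-dimensional real inner product space and Ω ⊆ V a nonempty open convex cone such that ⟨v, w⟩ > 0 for all v, w ∈ Ω. Let K ⊆ Ω be a nonempty kernel of Ω, i.e. K + Ω ⊆ K and 0 is not in the closure of K. Then the semi-dual K^∨ = {h ∈ V : ⟨h, a⟩ ≥ 1 for all a ∈ K} again satisfies the kernel conditions: 0 is not in the closure of K^∨, and K^∨ + Ω ⊆ K^∨. -/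
open scoped Pointwise RealInnerProductSpace

section SemiDual

variable {V : Type*} [SeminormedAddCommGroup V] [InnerProductSpace ℝ V]

def semiDual (A : Set V) : Set V := {h | ∀ a ∈ A, 1 ≤ ⟪h, a⟫}

theorem closure_semiDual_subset {A : Set V} {a : V} (ha : a ∈ A) :
    closure (semiDual A) ⊆ {h | 1 ≤ ⟪h, a⟫} :=
  closure_minimal (fun _ hh => hh a ha)
    (isClosed_le continuous_const (continuous_id.inner continuous_const))

theorem zero_notMem_closure_semiDual {A : Set V} (hA : A.Nonempty) :
    (0 : V) ∉ closure (semiDual A) := by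
  obtain ⟨a, ha⟩ := hA
  intro h0
  have h1 : (1 : ℝ) ≤ ⟪0, a⟫ := closure_semiDual_subset ha h0
  rw [inner_zero_left] at h1
  linarith

theorem semiDual_add_subset {A C : Set V} (hC : ∀ v ∈ C, ∀ a ∈ A, 0 ≤ ⟪v, a⟫) :
    semiDual A + C ⊆ semiDual A := by
  rintro _ ⟨h, hh, v, hv, rfl⟩ a ha
  rw [inner_add_left]
  linarith [hh a ha, hC v hv a ha]

end SemiDual

theorem stmt15_general (V : Type*) [NormedAddCommGroup V] [InnerProductSpace ℝ V]
    (Ω : Set V)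
    (hpos : ∀ v ∈ Ω, ∀ w ∈ Ω, 0 < ⟪v, w⟫)
    (K : Set V) (hKΩ : K ⊆ Ω) (hKne : K.Nonempty)
    (Kdual : Set V) (hKdual : Kdual = {h : V | ∀ a ∈ K, 1 ≤ ⟪h, a⟫}) :
    0 ∉ closure Kdual ∧ Kdual + Ω ⊆ Kdual := by
  change Kdual = semiDual K at hKdual
  subst hKdual
  exact ⟨zero_notMem_closure_semiDual hKne,
    semiDual_add_subset fun v hv a ha => (hpos v hv a (hKΩ ha)).le⟩

/-- The semi-dual `K^∨ = {h : ⟨h, a⟩ ≥ 1 for all a ∈ K}` of a kernel `K` of an open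
convex cone `Ω` (on which the inner product is positive) is again a kernel:
`0 ∉ closure(K^∨)` and `K^∨ + Ω ⊆ K^∨`. -/
theorem stmt15 (V : Type*) [NormedAddCommGroup V] [InnerProductSpace ℝ V]
    [FiniteDimensional ℝ V]
    (Ω : Set V) (hopen : IsOpen Ω) (hconv : Convex ℝ Ω) (hne : Ω.Nonempty)
    (hcone : ∀ c : ℝ, 0 < c → c • Ω = Ω)
    (hpos : ∀ v ∈ Ω, ∀ w ∈ Ω, 0 < ⟪v, w⟫)
    (K : Set V) (hKΩ : K ⊆ Ω) (hKne : K.Nonempty)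
    (hker : K + Ω ⊆ K) (hK0 : 0 ∉ closure K)
    (Kdual : Set V) (hKdual : Kdual = {h : V | ∀ a ∈ K, 1 ≤ ⟪h, a⟫}) :
    0 ∉ closure Kdual ∧ Kdual + Ω ⊆ Kdual :=
  stmt15_general V Ω hpos K hKΩ hKne Kdual hKdual
end
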